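/- Let 𝕂 be a field with a non-discrete Hausdorff topology in which 𝕂ˣ is dense, F a Hausdorff topological 𝕂-vector space, I ⊆ 𝕂 an open neighbourhood of 0, k ∈ ℕ, a₀,…,a_k ∈ F, and R : I → F a continuous map with R(0) = 0. If Σ_{j=0}^k t^j • a_j + t^k • R(t) = 0 for all t ∈ I, then a_j = 0 for all j = 0,…,k (and consequently R = 0). -/

import Mathlib

open Filter Topology

/-- Uniqueness of finite Taylor-type expansions (Lemma 5.2 of Bertram–Glöckner–Neeb):
if `Σ_{j=0}^k t^j • a_j + t^k • R(t) = 0` on an open zero-neighbourhood `I`, with `R`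
continuous and `R(0) = 0`, then all coefficients `a_j` vanish, and `R` vanishes on `I`. -/
theorem stmt_6 (𝕂 : Type*) [Field 𝕂] [TopologicalSpace 𝕂] [IsTopologicalRing 𝕂] [T2Space 𝕂]
    (hK : Dense {t : 𝕂 | t ≠ 0})
    (F : Type*) [AddCommGroup F] [Module 𝕂 F] [TopologicalSpace F]
    [IsTopologicalAddGroup F] [ContinuousSMul 𝕂 F] [T2Space F]
    (I : Set 𝕂) (hI : IsOpen I) (h0 : (0 : 𝕂) ∈ I) (k : ℕ)
    (a : ℕ → F) (R : 𝕂 → F) (hR : ContinuousOn R I) (hR0 : R 0 = 0)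
    (hexp : ∀ t ∈ I, (∑ j ∈ Finset.range (k + 1), t ^ j • a j) + t ^ k • R t = 0) :
    (∀ j ≤ k, a j = 0) ∧ ∀ t ∈ I, R t = 0 := by
  induction k generalizing a with
  | zero =>
    have ha0 : a 0 = 0 := by simpa [Finset.sum_range_succ', pow_succ, hR0] using hexp 0 h0
    refine ⟨fun j hj => by simpa [Nat.le_zero.mp hj] using ha0, fun t ht => ?_⟩
    simpa [ha0] using hexp t ht
  | succ k ih =>
    have ha0 : a 0 = 0 := by simpa [Finset.sum_range_succ', pow_succ, hR0] using hexp 0 h0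
    set g : 𝕂 → F := fun t => (∑ j ∈ Finset.range (k + 1), t ^ j • a (j + 1)) + t ^ k • R t
      with hg
    have hg_cont : ContinuousOn g I := by
      apply ContinuousOn.add
      · exact (continuous_finset_sum _ fun j _ =>
          (continuous_pow j).smul continuous_const).continuousOn
      · exact ((continuous_pow k).continuousOn).smul hR
    have hg_ne : ∀ t ∈ I, t ≠ 0 → g t = 0 := by
      intro t ht htne
      have h1 := hexp t ht
      rw [Finset.sum_range_succ'] at h1
      have h2 : t • g t = 0 := by
        simp only [hg, smul_add, Finset.smul_sum, smul_smul, ← pow_succ']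
        simpa [ha0] using h1
      have := congrArg (fun x => t⁻¹ • x) h2
      simpa [smul_smul, inv_mul_cancel₀ htne] using this
    have h0c : (0 : 𝕂) ∈ closure (I ∩ {t : 𝕂 | t ≠ 0}) :=
      hK.open_subset_closure_inter hI h0
    have hnb : (𝓝[I ∩ {t : 𝕂 | t ≠ 0}] (0 : 𝕂)).NeBot :=
      mem_closure_iff_nhdsWithin_neBot.mp h0c
    have hg0 : g 0 = 0 := by
      have t1 : Tendsto g (𝓝[I ∩ {t : 𝕂 | t ≠ 0}] (0 : 𝕂)) (𝓝 (g 0)) :=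
        ((hg_cont.continuousAt (hI.mem_nhds h0)).tendsto).mono_left nhdsWithin_le_nhds
      have t2 : Tendsto g (𝓝[I ∩ {t : 𝕂 | t ≠ 0}] (0 : 𝕂)) (𝓝 0) := by
        refine Tendsto.congr' ?_ tendsto_const_nhds
        filter_upwards [self_mem_nhdsWithin] with t ht
        exact (hg_ne t ht.1 ht.2).symm
      exact tendsto_nhds_unique t1 t2
    have hgI : ∀ t ∈ I, g t = 0 := by
      intro t ht
      rcases eq_or_ne t 0 with rfl | hne
      · exact hg0
      · exact hg_ne t ht hne
    obtain ⟨h1, h2⟩ := ih (fun j => a (j + 1)) hgI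
    refine ⟨fun j hj => ?_, h2⟩
    rcases j with _ | i
    · exact ha0
    · exact h1 i (Nat.succ_le_succ_iff.mp hj)
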